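/- Let B be a finite acyclic simple graph and A a set of vertices of B. Then A ≤* B if and only if there is no edge of B with one endpoint in A and the other endpoint in B \ A. -/

import Mathlib

open scoped Classical

/-- The set of edges of `G` with both endpoints in the finite vertex set `S`. -/
noncomputable def edgesWithin {V : Type*} (G : SimpleGraph V) (S : Finset V) :
    Finset (Sym2 V) :=
  S.sym2.filter (fun e => e ∈ G.edgeSet)

/-- The predimension `δ(S) = |S| - |{edges of G with both endpoints in S}|`. -/
noncomputable def delta {V : Type*} (G : SimpleGraph V) (S : Finset V) : ℤ :=
  (S.card : ℤ) - ((edgesWithin G S).card : ℤ)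

open SimpleGraph Finset


lemma leaf_in_S {V : Type*} [Fintype V] {G : SimpleGraph V} (hG : G.IsAcyclic)
    (S : Finset V) (hS : S.Nonempty) :
    ∃ v ∈ S, (S.filter (fun y => G.Adj v y)).card ≤ 1 := by
  set P : ℕ → Prop := fun n => ∃ (u v : V) (p : G.Walk u v),
      p.IsPath ∧ (∀ y ∈ p.support, y ∈ S) ∧ p.length = n with hPdef
  obtain ⟨u0, hu0⟩ := hS
  have hP0 : P 0 := ⟨u0, u0, Walk.nil, Walk.IsPath.nil, by simp [hu0], rfl⟩
  have hbound : ∀ n, P n → n ≤ S.card := by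
    rintro n ⟨u, v, p, hp, hsup, rfl⟩
    have h1 : p.support.toFinset ⊆ S := fun y hy => hsup y (List.mem_toFinset.mp hy)
    have h2 : p.support.toFinset.card = p.length + 1 := by
      rw [List.toFinset_card_of_nodup hp.support_nodup, Walk.length_support]
    have := Finset.card_le_card h1
    omega
  set N := Nat.findGreatest P S.card with hN
  have hPN : P N := Nat.findGreatest_spec (Nat.zero_le _) hP0
  have hmax : ∀ m, P m → m ≤ N := by
    intro m hm
    by_contra hlt
    exact Nat.findGreatest_is_greatest (Nat.lt_of_not_le hlt) (hbound m hm) hm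
  obtain ⟨u, v, p, hp, hsup, hlen⟩ := hPN
  refine ⟨v, hsup _ (Walk.end_mem_support p), ?_⟩
  by_contra h2
  push_neg at h2
  obtain ⟨q, hq, hsupq, hlenq⟩ : ∃ q : G.Walk v u, q.IsPath ∧ (∀ y ∈ q.support, y ∈ S)
      ∧ q.length = N :=
    ⟨p.reverse, hp.reverse, fun y hy => hsup y (by simpa [Walk.support_reverse] using hy),
      by simp [hlen]⟩
  clear hsup hlen hp
  cases q with
  | nil =>
      obtain ⟨x, hx, -⟩ := Finset.exists_mem_ne h2 u
      rw [Finset.mem_filter] at hx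
      have hpath : (Walk.cons hx.2 Walk.nil).IsPath := by
        rw [Walk.cons_isPath_iff]
        exact ⟨Walk.IsPath.nil, by simp [hx.2.ne]⟩
      have : (1 : ℕ) ≤ N := hmax 1 ⟨u, x, _, hpath, by
        intro y hy
        simp only [Walk.support_cons, Walk.support_nil, List.mem_cons, List.mem_singleton] at hy
        rcases hy with rfl | rfl | h
        · exact hsupq _ (Walk.start_mem_support _)
        · exact hx.1
        · exact absurd h List.not_mem_nil, rfl⟩
      simp only [Walk.length_nil] at hlenq
      omega
  | cons hvw r =>
      rename_i w
      obtain ⟨x, hx, hxw⟩ := Finset.exists_mem_ne h2 w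
      rw [Finset.mem_filter] at hx
      have hvx : G.Adj v x := hx.2
      by_cases hxs : x ∈ (Walk.cons hvw r).support
      · -- build a cycle
        have hxv : x ≠ v := hvx.ne'
        set t := (Walk.cons hvw r).takeUntil x hxs with ht
        have htp : t.IsPath := hq.takeUntil hxs
        have hne : s(x, v) ∉ t.edges := by
          intro hmem
          have hmem' := Walk.edges_takeUntil_subset _ hxs hmem
          rw [Walk.edges_cons, List.mem_cons] at hmem'
          rcases hmem' with heq | hmem'
          · rw [Sym2.eq_iff] at heq
            rcases heq with ⟨rfl, rfl⟩ | ⟨rfl, -⟩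
            · exact hxv rfl
            · exact hxw rfl
          · exact ((Walk.cons_isPath_iff hvw r).mp hq).2 (Walk.snd_mem_support_of_mem_edges r hmem')
        have hcyc : (Walk.cons hvx.symm t).IsCycle :=
          (Walk.cons_isCycle_iff t hvx.symm).mpr ⟨htp, hne⟩
        exact hG _ hcyc
      · have hpath : (Walk.cons hvx.symm (Walk.cons hvw r)).IsPath :=
          (Walk.cons_isPath_iff _ _).mpr ⟨hq, hxs⟩
        have : N + 1 ≤ N := hmax (N + 1) ⟨x, u, _, hpath, by
          intro y hy
          rw [Walk.support_cons, List.mem_cons] at hy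
          rcases hy with rfl | hy
          · exact hx.1
          · exact hsupq y hy, by rw [Walk.length_cons, hlenq]⟩
        omega

lemma mem_edgesWithin {V : Type*} {G : SimpleGraph V} {S : Finset V} {e : Sym2 V} :
    e ∈ edgesWithin G S ↔ (∀ y ∈ e, y ∈ S) ∧ e ∈ G.edgeSet := by
  simp [edgesWithin, Finset.mk_mem_sym2_iff, Finset.mem_sym2_iff]

lemma edgesWithin_mono {V : Type*} (G : SimpleGraph V) {S T : Finset V} (h : S ⊆ T) :
    edgesWithin G S ⊆ edgesWithin G T := by
  intro e he
  rw [mem_edgesWithin] at he ⊢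
  exact ⟨fun y hy => h (he.1 y hy), he.2⟩

lemma forest_bound {V : Type*} [Fintype V] {G : SimpleGraph V} (hG : G.IsAcyclic)
    (S : Finset V) (hS : S.Nonempty) : (edgesWithin G S).card < S.card := by
  induction S using Finset.strongInduction with
  | _ S ih =>
    obtain ⟨v, hv, hdeg⟩ := leaf_in_S hG S hS
    have hT : ((edgesWithin G S).filter (fun e => v ∈ e)).card ≤ 1 := by
      refine le_trans (Finset.card_le_card_of_injOn
        (fun e => if h : v ∈ e then Sym2.Mem.other h else v) ?_ ?_) hdeg
      · intro e he
        rw [Finset.mem_coe, Finset.mem_filter] at he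
        obtain ⟨he1, he2⟩ := he
        rw [mem_edgesWithin] at he1
        simp only [dif_pos he2, Finset.mem_coe, Finset.mem_filter]
        refine ⟨he1.1 _ (Sym2.other_mem he2), ?_⟩
        have := Sym2.other_spec he2
        rw [← SimpleGraph.mem_edgeSet, this]
        exact he1.2
      · intro e1 h1 e2 h2 hf
        rw [Finset.coe_filter, Set.mem_setOf_eq] at h1 h2
        simp only [dif_pos h1.2, dif_pos h2.2] at hf
        rw [← Sym2.other_spec h1.2, ← Sym2.other_spec h2.2, hf]
    by_cases hS' : (S.erase v).Nonempty
    · have ih' := ih (S.erase v) (Finset.erase_ssubset hv) hS'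
      have hsplit : (edgesWithin G S).filter (fun e => ¬ v ∈ e) = edgesWithin G (S.erase v) := by
        ext e
        rw [Finset.mem_filter, mem_edgesWithin, mem_edgesWithin]
        constructor
        · rintro ⟨⟨hall, hE⟩, hnv⟩
          refine ⟨fun y hy => Finset.mem_erase.mpr ⟨?_, hall y hy⟩, hE⟩
          rintro rfl; exact hnv hy
        · rintro ⟨hall, hE⟩
          refine ⟨⟨fun y hy => Finset.mem_of_mem_erase (hall y hy), hE⟩, fun hvE => ?_⟩
          exact (Finset.mem_erase.mp (hall v hvE)).1 rfl
      have hcards := Finset.card_filter_add_card_filter_not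
        (s := edgesWithin G S) (p := fun e => v ∈ e)
      rw [hsplit] at hcards
      have hScard : (S.erase v).card + 1 = S.card := Finset.card_erase_add_one hv
      omega
    · have hsing : S = {v} := by
        apply Finset.eq_singleton_iff_unique_mem.mpr
        refine ⟨hv, fun y hy => ?_⟩
        by_contra hne
        exact hS' ⟨y, Finset.mem_erase.mpr ⟨hne, hy⟩⟩
      subst hsing
      have : edgesWithin G {v} = ∅ := by
        ext e
        simp only [Finset.notMem_empty, iff_false]
        intro he
        rw [mem_edgesWithin] at he
        induction e with
        | _ a b =>
          have ha : a = v := by simpa using he.1 a (by simp)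
          have hb : b = v := by simpa using he.1 b (by simp)
          subst ha hb
          exact G.irrefl (G.mem_edgeSet.mp he.2)
      simp [this]

theorem stmt_2 {V : Type*} [Fintype V] (B : SimpleGraph V) (hB : B.IsAcyclic)
    (A : Finset V) :
    (∀ C : Finset V, A ⊂ C → delta B A < delta B C) ↔
      (∀ u v : V, B.Adj u v → u ∈ A → v ∈ A) := by
  constructor
  · intro hA u v huv hu
    by_contra hv
    have hsub : A ⊂ insert v A := Finset.ssubset_insert hv
    have hE : edgesWithin B A ⊂ edgesWithin B (insert v A) := by
      refine ⟨edgesWithin_mono B (Finset.subset_insert v A), fun hcon => ?_⟩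
      have hmem : s(u, v) ∈ edgesWithin B (insert v A) := by
        rw [mem_edgesWithin]
        refine ⟨?_, B.mem_edgeSet.mpr huv⟩
        intro y hy; rw [Sym2.mem_iff] at hy
        rcases hy with rfl | rfl
        · exact Finset.mem_insert_of_mem hu
        · exact Finset.mem_insert_self _ A
      have := (mem_edgesWithin.mp (hcon hmem)).1 v (by simp)
      exact hv this
    have h1 := Finset.card_lt_card hE
    have h2 := Finset.card_insert_of_notMem hv
    have h3 := hA _ hsub
    unfold delta at h3
    rw [h2] at h3
    omega
  · intro hcl C hsub
    have hAC : A ⊆ C := hsub.subset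
    set D := C \ A with hD
    have hDne : D.Nonempty := by
      obtain ⟨x, hxC, hxA⟩ := Finset.exists_of_ssubset hsub
      exact ⟨x, Finset.mem_sdiff.mpr ⟨hxC, hxA⟩⟩
    have hsplit : edgesWithin B C = edgesWithin B A ∪ edgesWithin B D := by
      apply Finset.Subset.antisymm
      · intro e he
        rw [mem_edgesWithin] at he
        rw [Finset.mem_union]
        induction e with
        | _ a b =>
          by_cases ha : a ∈ A
          · left
            rw [mem_edgesWithin]
            refine ⟨?_, he.2⟩
            have hb : b ∈ A := hcl a b (B.mem_edgeSet.mp he.2) ha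
            intro y hy; rw [Sym2.mem_iff] at hy; rcases hy with rfl|rfl <;> assumption
          · right
            rw [mem_edgesWithin]
            refine ⟨?_, he.2⟩
            have hb : b ∉ A := fun hb => ha (hcl b a (B.mem_edgeSet.mp he.2).symm hb)
            intro y hy; rw [Sym2.mem_iff] at hy
            rcases hy with rfl|rfl <;>
              exact Finset.mem_sdiff.mpr ⟨he.1 _ (by simp), by assumption⟩
      · exact Finset.union_subset (edgesWithin_mono B hAC)
          (edgesWithin_mono B (Finset.sdiff_subset))
    have hdisj : Disjoint (edgesWithin B A) (edgesWithin B D) := by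
      rw [Finset.disjoint_left]
      intro e heA heD
      rw [mem_edgesWithin] at heA heD
      induction e with
      | _ a b =>
        have h1 : a ∈ A := heA.1 a (by simp)
        have h2 : a ∈ D := heD.1 a (by simp)
        exact (Finset.mem_sdiff.mp h2).2 h1
    have hcardE : (edgesWithin B C).card = (edgesWithin B A).card + (edgesWithin B D).card := by
      rw [hsplit, Finset.card_union_of_disjoint hdisj]
    have hcardV : D.card + A.card = C.card := Finset.card_sdiff_add_card_eq_card hAC
    have hfb := forest_bound hB D hDne
    unfold delta
    omega
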